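/- Let Γ be a discrete subgroup of E(n), and let (G, V) be a finite index cocompact translation pair of Γ. Then for every γ ∈ G one has |tran_V(γ)| ≤ |tran(γ)| ≤ |tran_V(γ)| + 2·d(0, V), and consequently for all r ≥ 0: N_G^V(r − 2·d(0,V)) ≤ N_G(r) ≤ N_G^V(r). -/

import Mathlib

open Metric Filter MeasureTheory Asymptotics

noncomputable section

/-- `ℝⁿ` as a Euclidean space. -/
abbrev En (n : ℕ) := EuclideanSpace ℝ (Fin n)

/-- The Euclidean group `E(n)`, i.e. the isometry group of `ℝⁿ`. -/
abbrev Isom (n : ℕ) := En n ≃ᵢ En n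

/-- The translation part `tran γ = γ 0` of a Euclidean isometry
(for `γ : x ↦ Ax + a` this is `a`). -/
def tran {n : ℕ} (γ : Isom n) : En n := γ 0

/-- The orthogonal part `ort γ` of a Euclidean isometry, as a self-map of `ℝⁿ`
(for `γ : x ↦ Ax + a` this is the map `x ↦ Ax`). -/
def ort {n : ℕ} (γ : Isom n) : En n → En n := fun x => γ x - γ 0

/-- A subgroup `Γ ≤ E(n)` is discrete (in the topology of `O(n) × ℝⁿ`) if and only if the
identity is isolated in `Γ`; the metric `sup_{‖x‖ ≤ 1} ‖γ x - x‖` induces that topology. -/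
def IsDiscreteSubgroup {n : ℕ} (Γ : Subgroup (Isom n)) : Prop :=
  ∃ ε > 0, ∀ γ ∈ Γ, γ ≠ 1 → ∃ x : En n, ‖x‖ ≤ 1 ∧ ε ≤ dist (γ x) x

/-- The subgroup of all translations of `ℝⁿ` inside the isometry group; the translation
subgroup `Γ_T` of a subgroup `Γ ≤ E(n)` is then `Γ ⊓ Translations n`. -/
def Translations (n : ℕ) : Subgroup (Isom n) where
  carrier := {γ : Isom n | ∀ x : En n, γ x = x + γ 0}
  one_mem' := by intro x; simp
  mul_mem' := by
    intro a b ha hb x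
    show a (b x) = x + a (b 0)
    rw [hb x, ha (x + b 0), hb 0, ha (0 + b 0)]
    abel
  inv_mem' := by
    intro a ha x
    show a.symm x = x + a.symm 0
    apply a.injective
    have h0 : a (a.symm 0) = 0 := a.apply_symm_apply 0
    rw [a.apply_symm_apply, ha (x + a.symm 0)]
    have hsum : a.symm 0 + a 0 = 0 := by
      have := ha (a.symm 0); rw [h0] at this; exact this.symm
    rw [add_assoc, hsum, add_zero]

/-- `(G, V)` is a cocompact translation pair of `Γ`: `G ≤ Γ`, `V` is a (nonempty) affine
subspace of `ℝⁿ` with `GV = V`, every `g ∈ G` restricts to `V` as a translation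
(by the vector `v = tran_V(g)`), and `V/G` is compact. -/
structure IsCocompactTranslationPair {n : ℕ} (Γ G : Subgroup (Isom n))
    (V : AffineSubspace ℝ (En n)) : Prop where
  le : G ≤ Γ
  nonempty : (V : Set (En n)).Nonempty
  invariant : ∀ g ∈ G, ∀ x ∈ (V : Set (En n)), g x ∈ (V : Set (En n))
  translation : ∀ g ∈ G, ∃ v : En n, ∀ x ∈ (V : Set (En n)), g x = x + v
  cocompact : ∃ K : Set (En n), IsCompact K ∧ K ⊆ (V : Set (En n)) ∧
    ∀ x ∈ (V : Set (En n)), ∃ g ∈ G, g x ∈ K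

/-- `N_Γ(r)`: the number of `γ ∈ Γ` with `|tran γ| ≤ r`. -/
def NCount {n : ℕ} (Γ : Subgroup (Isom n)) (r : ℝ) : ℕ :=
  {γ : Isom n | γ ∈ Γ ∧ ‖tran γ‖ ≤ r}.ncard

/-- `N_G^V(r)`: the number of `γ ∈ G` whose translation vector `tran_V γ` on `V`
satisfies `|tran_V γ| ≤ r`. -/
def NVCount {n : ℕ} (G : Subgroup (Isom n)) (V : AffineSubspace ℝ (En n)) (r : ℝ) : ℕ :=
  {γ : Isom n | γ ∈ G ∧ ∃ v : En n,
    (∀ x ∈ (V : Set (En n)), γ x = x + v) ∧ ‖v‖ ≤ r}.ncard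

/-- `Λ_G(r)`: the number of distinct orthogonal parts `ort γ` over `γ ∈ G` with
`|tran γ| ≤ r`. -/
def LamCount {n : ℕ} (G : Subgroup (Isom n)) (r : ℝ) : ℕ :=
  {f : En n → En n | ∃ γ, γ ∈ G ∧ ‖tran γ‖ ≤ r ∧ f = ort γ}.ncard

/-- `Λ_G^V(r)`: the number of distinct orthogonal parts `ort γ` over `γ ∈ G` with
`|tran_V γ| ≤ r`. -/
def LamVCount {n : ℕ} (G : Subgroup (Isom n)) (V : AffineSubspace ℝ (En n)) (r : ℝ) : ℕ :=
  {f : En n → En n | ∃ γ, γ ∈ G ∧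
    (∃ v : En n, (∀ x ∈ (V : Set (En n)), γ x = x + v) ∧ ‖v‖ ≤ r) ∧ f = ort γ}.ncard

lemma abs_coord_le_norm {n : ℕ} (x : En n) (i : Fin n) : |x i| ≤ ‖x‖ := by
  rw [EuclideanSpace.norm_eq]
  have h1 : |x i| = Real.sqrt (‖x i‖^2) := by
    rw [Real.sqrt_sq_eq_abs]; simp [Real.norm_eq_abs, abs_abs]
  rw [h1]
  apply Real.sqrt_le_sqrt
  exact Finset.single_le_sum (f := fun j => ‖x j‖^2) (fun j _ => sq_nonneg _) (Finset.mem_univ i)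

lemma finite_sep {α : Type*} [MetricSpace α] {s : Set α} (hs : TotallyBounded s)
    {ε : ℝ} (hε : 0 < ε) (hsep : ∀ x ∈ s, ∀ y ∈ s, x ≠ y → ε ≤ dist x y) : s.Finite := by
  obtain ⟨t, htf, hcover⟩ := (Metric.totallyBounded_iff.1 hs) (ε/2) (by linarith)
  have hsub : s ⊆ ⋃ y ∈ t, s ∩ ball y (ε/2) := by
    intro x hx
    obtain ⟨y, hy, hxy⟩ := Set.mem_iUnion₂.1 (hcover hx)
    exact Set.mem_iUnion₂.2 ⟨y, hy, hx, hxy⟩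
  refine Set.Finite.subset (Set.Finite.biUnion htf (fun y _ => ?_)) hsub
  refine Set.Subsingleton.finite ?_
  intro a ha b hb
  by_contra hne
  have h1 := hsep a ha.1 b hb.1 hne
  have h2 : dist a b < ε := by
    have ha' : dist a y < ε/2 := mem_ball.1 ha.2
    have hb' : dist b y < ε/2 := mem_ball.1 hb.2
    calc dist a b ≤ dist a y + dist y b := dist_triangle _ _ _
      _ = dist a y + dist b y := by rw [dist_comm y b]
      _ < ε := by linarith
  linarith

lemma isom_eq_lin_add {n : ℕ} (γ : Isom n) (x : En n) :
    γ x = γ.toRealLinearIsometryEquiv x + γ 0 := by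
  rw [IsometryEquiv.toRealLinearIsometryEquiv_apply]; abel

lemma finite_tran_le {n : ℕ} (Γ G : Subgroup (Isom n)) (hΓ : IsDiscreteSubgroup Γ)
    (hle : G ≤ Γ) (r : ℝ) : {γ : Isom n | γ ∈ G ∧ ‖tran γ‖ ≤ r}.Finite := by
  classical
  obtain ⟨ε, hε, hd⟩ := hΓ
  set S := {γ : Isom n | γ ∈ G ∧ ‖tran γ‖ ≤ r} with hS
  set p : Fin (n+1) → En n := Fin.cons 0 (fun i => EuclideanSpace.single i 1) with hp
  set Φ : Isom n → (Fin (n+1) → En n) := fun γ => fun i => γ (p i) with hΦ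
  have hp0 : p 0 = 0 := Fin.cons_zero _ _
  have hps : ∀ i : Fin n, p i.succ = EuclideanSpace.single i 1 := fun i => Fin.cons_succ _ _ i
  -- injectivity
  have hinj : Function.Injective Φ := by
    intro γ δ h
    have h0 : γ 0 = δ 0 := by
      have := congrFun h 0; simpa [hΦ, hp0] using this
    have hi : ∀ i : Fin n, γ (EuclideanSpace.single i 1) = δ (EuclideanSpace.single i 1) := by
      intro i
      have := congrFun h i.succ; simpa [hΦ, hps i] using this
    have hlin : γ.toRealLinearIsometryEquiv.toLinearEquiv.toLinearMap
        = δ.toRealLinearIsometryEquiv.toLinearEquiv.toLinearMap := by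
      apply (EuclideanSpace.basisFun (Fin n) ℝ).toBasis.ext
      intro i
      simp [EuclideanSpace.basisFun_apply, hi i, h0]
    ext x
    have hL : γ.toRealLinearIsometryEquiv x = δ.toRealLinearIsometryEquiv x := by
      have := LinearMap.congr_fun hlin x
      simpa using this
    rw [isom_eq_lin_add γ x, isom_eq_lin_add δ x, hL, h0]
  -- separation
  have hsepS : ∀ γ ∈ S, ∀ δ ∈ S, γ ≠ δ → ε / (2*(n:ℝ)+1) ≤ dist (Φ γ) (Φ δ) := by
    intro γ hγ δ hδ hne
    have hη : γ⁻¹ * δ ∈ Γ := mul_mem (inv_mem (hle hγ.1)) (hle hδ.1)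
    have hη1 : γ⁻¹ * δ ≠ 1 := by
      intro h; exact hne (inv_mul_eq_one.mp h)
    obtain ⟨x, hx1, hεx⟩ := hd _ hη hη1
    have hdx : dist ((γ⁻¹ * δ) x) x = dist (δ x) (γ x) := by
      rw [IsometryEquiv.mul_apply, ← γ.dist_eq, IsometryEquiv.apply_inv_self]
    rw [hdx] at hεx
    set M := dist (Φ γ) (Φ δ) with hM
    have hM0 : (0:ℝ) ≤ M := dist_nonneg
    have hMi : ∀ i, dist (γ (p i)) (δ (p i)) ≤ M := fun i => dist_le_pi_dist (Φ γ) (Φ δ) i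
    -- coordinates bound
    have hLi : ∀ i : Fin n, ‖δ.toRealLinearIsometryEquiv (EuclideanSpace.single i 1)
        - γ.toRealLinearIsometryEquiv (EuclideanSpace.single i 1)‖ ≤ 2 * M := by
      intro i
      rw [IsometryEquiv.toRealLinearIsometryEquiv_apply,
        IsometryEquiv.toRealLinearIsometryEquiv_apply]
      have h1 : dist (γ (EuclideanSpace.single i 1)) (δ (EuclideanSpace.single i 1)) ≤ M := by
        have := hMi i.succ; rwa [hps i] at this
      have h2 : dist (γ 0) (δ 0) ≤ M := by
        have := hMi 0; rwa [hp0] at this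
      calc ‖(δ (EuclideanSpace.single i 1) - δ 0) - (γ (EuclideanSpace.single i 1) - γ 0)‖
          = ‖(δ (EuclideanSpace.single i 1) - γ (EuclideanSpace.single i 1)) - (δ 0 - γ 0)‖ := by
            congr 1; abel
        _ ≤ ‖δ (EuclideanSpace.single i 1) - γ (EuclideanSpace.single i 1)‖ + ‖δ 0 - γ 0‖ :=
            norm_sub_le _ _
        _ ≤ 2 * M := by
            rw [← dist_eq_norm, ← dist_eq_norm, dist_comm (δ (EuclideanSpace.single i 1)),
              dist_comm (δ 0)]
            linarith
    -- linear part bound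
    have hLx : ‖δ.toRealLinearIsometryEquiv x - γ.toRealLinearIsometryEquiv x‖
        ≤ (n:ℝ) * (2*M) := by
      have hx' : x = ∑ i : Fin n, x i • EuclideanSpace.single i (1:ℝ) := by
        have := (EuclideanSpace.basisFun (Fin n) ℝ).sum_repr x
        simp only [EuclideanSpace.basisFun_repr, EuclideanSpace.basisFun_apply] at this
        exact this.symm
      have hsum : ∀ L : En n ≃ₗᵢ[ℝ] En n,
          L x = ∑ i : Fin n, x i • L (EuclideanSpace.single i 1) := by
        intro L
        conv_lhs => rw [hx']
        rw [map_sum]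
        simp
      calc ‖δ.toRealLinearIsometryEquiv x - γ.toRealLinearIsometryEquiv x‖
          = ‖∑ i : Fin n, x i • (δ.toRealLinearIsometryEquiv (EuclideanSpace.single i 1)
              - γ.toRealLinearIsometryEquiv (EuclideanSpace.single i 1))‖ := by
            rw [hsum δ.toRealLinearIsometryEquiv, hsum γ.toRealLinearIsometryEquiv,
              ← Finset.sum_sub_distrib]
            simp only [smul_sub]
        _ ≤ ∑ i : Fin n, ‖x i • (δ.toRealLinearIsometryEquiv (EuclideanSpace.single i 1)
              - γ.toRealLinearIsometryEquiv (EuclideanSpace.single i 1))‖ :=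
            norm_sum_le _ _
        _ ≤ ∑ _i : Fin n, 2*M := by
            apply Finset.sum_le_sum
            intro i _
            rw [norm_smul]
            have h1 : ‖x i‖ ≤ 1 := by
              rw [Real.norm_eq_abs]; exact (abs_coord_le_norm x i).trans hx1
            have h2 := hLi i
            nlinarith [norm_nonneg (δ.toRealLinearIsometryEquiv (EuclideanSpace.single i 1)
              - γ.toRealLinearIsometryEquiv (EuclideanSpace.single i 1))]
        _ = (n:ℝ) * (2*M) := by simp [Finset.sum_const, mul_comm]
    -- total bound
    have htot : dist (δ x) (γ x) ≤ (2*(n:ℝ)+1) * M := by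
      have h0 : ‖δ 0 - γ 0‖ ≤ M := by
        rw [← dist_eq_norm, dist_comm]
        have := hMi 0; rwa [hp0] at this
      calc dist (δ x) (γ x) = ‖(δ.toRealLinearIsometryEquiv x - γ.toRealLinearIsometryEquiv x)
            + (δ 0 - γ 0)‖ := by
            rw [dist_eq_norm, isom_eq_lin_add δ x, isom_eq_lin_add γ x]
            congr 1; abel
        _ ≤ ‖δ.toRealLinearIsometryEquiv x - γ.toRealLinearIsometryEquiv x‖ + ‖δ 0 - γ 0‖ :=
            norm_add_le _ _
        _ ≤ (2*(n:ℝ)+1) * M := by linarith [hLx]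
    rw [div_le_iff₀ (by positivity)]
    calc ε ≤ dist (δ x) (γ x) := hεx
      _ ≤ (2*(n:ℝ)+1) * M := htot
      _ = M * (2*(n:ℝ)+1) := mul_comm _ _
  -- boundedness
  have hbd : Φ '' S ⊆ closedBall (0 : Fin (n+1) → En n) (|r| + 1) := by
    rintro _ ⟨γ, hγ, rfl⟩
    rw [mem_closedBall, dist_zero_right]
    rw [pi_norm_le_iff_of_nonneg (by positivity)]
    intro i
    have h1 : ‖γ (p i)‖ ≤ ‖p i‖ + ‖γ 0‖ := by
      have h2 : dist (γ (p i)) (0:En n) ≤ dist (γ (p i)) (γ 0) + dist (γ 0) 0 :=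
        dist_triangle _ _ _
      rw [γ.dist_eq, dist_zero_right, dist_zero_right, dist_zero_right] at h2
      exact h2
    have h3 : ‖p i‖ ≤ 1 := by
      induction i using Fin.cases with
      | zero => rw [hp0]; simp
      | succ j => rw [hps j, EuclideanSpace.norm_single]; simp
    have h4 : ‖γ 0‖ ≤ |r| := le_trans hγ.2 (le_abs_self r)
    calc ‖Φ γ i‖ = ‖γ (p i)‖ := rfl
      _ ≤ ‖p i‖ + ‖γ 0‖ := h1
      _ ≤ |r| + 1 := by linarith
  -- conclude
  have hTB : TotallyBounded (Φ '' S) :=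
    (isCompact_closedBall _ _).totallyBounded.subset hbd
  have hεn : (0:ℝ) < ε / (2*(n:ℝ)+1) := by positivity
  have hTfin : (Φ '' S).Finite := by
    apply finite_sep hTB hεn
    rintro _ ⟨γ, hγ, rfl⟩ _ ⟨δ, hδ, rfl⟩ hne
    exact hsepS γ hγ δ hδ (fun h => hne (by rw [h]))
  exact Set.Finite.of_finite_image hTfin hinj.injOn

lemma pow_apply_mem {n : ℕ} {γ : Isom n} {x : En n} (k : ℕ) :
    (γ ^ (k+1)) x = γ ((γ ^ k) x) := by
  rw [pow_succ']; rfl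

lemma tranV_le_tran {n : ℕ} {G : Subgroup (Isom n)} {V : AffineSubspace ℝ (En n)}
    (hinv : ∀ g ∈ G, ∀ x ∈ (V : Set (En n)), g x ∈ (V : Set (En n)))
    {γ : Isom n} (hγ : γ ∈ G) {x : En n} (hx : x ∈ (V : Set (En n)))
    {v : En n} (hv : ∀ y ∈ (V : Set (En n)), γ y = y + v) :
    ‖v‖ ≤ ‖tran γ‖ := by
  have hpow : ∀ k : ℕ, (γ ^ k) x = x + (k : ℝ) • v := by
    intro k; induction k with
    | zero => simp
    | succ k ih =>
      have hxk : (γ ^ k) x ∈ (V : Set (En n)) := hinv _ (pow_mem hγ k) x hx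
      rw [pow_apply_mem, ih] at *
      rw [hv _ hxk]
      push_cast
      rw [add_smul, one_smul, add_assoc]
  have hdistk : ∀ k : ℕ, dist ((γ ^ k) 0) (0 : En n) ≤ k * dist (γ 0) 0 := by
    intro k; induction k with
    | zero => simp
    | succ k ih =>
      push_cast
      calc dist ((γ ^ (k+1)) 0) (0:En n) ≤ dist ((γ ^ (k+1)) 0) (γ 0) + dist (γ 0) 0 :=
            dist_triangle _ _ _
        _ = dist ((γ ^ k) 0) 0 + dist (γ 0) 0 := by rw [pow_apply_mem, γ.dist_eq]
        _ ≤ k * dist (γ 0) 0 + dist (γ 0) 0 := by linarith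
        _ = ((k:ℝ)+1) * dist (γ 0) 0 := by ring
  by_contra h
  push_neg at h
  set c := ‖v‖ - ‖tran γ‖ with hc
  have hcpos : 0 < c := by simp [hc]; linarith
  obtain ⟨k, hk⟩ := exists_nat_gt (2 * ‖x‖ / c)
  have h1 : (k:ℝ) * ‖v‖ = dist ((γ ^ k) x) x := by
    rw [hpow k]
    rw [dist_eq_norm, add_sub_cancel_left, norm_smul]
    simp [abs_of_nonneg (Nat.cast_nonneg (α := ℝ) k)]
  have h2 : dist ((γ ^ k) x) x ≤ dist x 0 + (k * dist (γ 0) 0 + dist (0:En n) x) := by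
    calc dist ((γ ^ k) x) x ≤ dist ((γ ^ k) x) ((γ ^ k) 0) + dist ((γ ^ k) 0) (0:En n) + dist (0:En n) x :=
          dist_triangle4 _ _ _ _
      _ = dist x 0 + dist ((γ ^ k) 0) (0:En n) + dist (0:En n) x := by rw [(γ ^ k).dist_eq]
      _ ≤ dist x 0 + (k * dist (γ 0) 0 + dist (0:En n) x) := by
          have := hdistk k; linarith
  have htran : dist (γ 0) (0:En n) = ‖tran γ‖ := by rw [dist_zero_right]; rfl
  rw [htran] at h2
  have hx0 : dist x (0:En n) = ‖x‖ := dist_zero_right x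
  have hx0' : dist (0:En n) x = ‖x‖ := by rw [dist_comm]; exact hx0
  rw [hx0, hx0'] at h2
  have hkc : (k:ℝ) * c ≤ 2 * ‖x‖ := by
    have := h1 ▸ h2
    -- k*‖v‖ ≤ ‖x‖ + (k*‖tran γ‖ + ‖x‖)
    nlinarith [h1, h2]
  have : 2 * ‖x‖ / c < k := hk
  rw [div_lt_iff₀ hcpos] at this
  linarith

lemma tran_le_tranV {n : ℕ} {V : AffineSubspace ℝ (En n)}
    (hne : (V : Set (En n)).Nonempty) {γ : Isom n} {v : En n}
    (hv : ∀ y ∈ (V : Set (En n)), γ y = y + v) :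
    ‖tran γ‖ ≤ ‖v‖ + 2 * infDist 0 (V : Set (En n)) := by
  have key : ∀ x ∈ (V : Set (En n)), (‖tran γ‖ - ‖v‖)/2 ≤ dist (0:En n) x := by
    intro x hx
    have h1 : ‖tran γ‖ = dist (γ 0) (0:En n) := (dist_zero_right _).symm
    have h2 : dist (γ 0) (0:En n) ≤ dist (γ 0) (γ x) + dist (γ x) x + dist x 0 :=
      dist_triangle4 _ _ _ _
    rw [γ.dist_eq] at h2
    have h3 : dist (γ x) x = ‖v‖ := by
      rw [hv x hx, dist_eq_norm, add_sub_cancel_left]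
    have h4 : dist x (0:En n) = dist (0:En n) x := dist_comm _ _
    rw [h3, h4] at h2
    linarith
  have hb : (‖tran γ‖ - ‖v‖)/2 ≤ infDist 0 (V : Set (En n)) := by
    by_contra hlt
    push_neg at hlt
    obtain ⟨y, hy, hd⟩ := (infDist_lt_iff hne).1 hlt
    have := key y hy
    linarith
  linarith


/-- For a finite index cocompact translation pair `(G, V)` of a discrete
`Γ ≤ E(n)`: `|tran_V γ| ≤ |tran γ| ≤ |tran_V γ| + 2 d(0, V)` for all `γ ∈ G`, and
consequently `N_G^V(r − 2 d(0,V)) ≤ N_G(r) ≤ N_G^V(r)` for all `r ≥ 0`. -/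
theorem tranV_tran_comparison {n : ℕ} (Γ G : Subgroup (Isom n))
    (V : AffineSubspace ℝ (En n)) (hΓ : IsDiscreteSubgroup Γ)
    (hpair : IsCocompactTranslationPair Γ G V) (hfin : G.relIndex Γ ≠ 0) :
    (∀ γ ∈ G, ∀ v : En n, (∀ x ∈ (V : Set (En n)), γ x = x + v) →
      ‖v‖ ≤ ‖tran γ‖ ∧ ‖tran γ‖ ≤ ‖v‖ + 2 * Metric.infDist 0 (V : Set (En n))) ∧
    (∀ r : ℝ, 0 ≤ r →
      NVCount G V (r - 2 * Metric.infDist 0 (V : Set (En n))) ≤ NCount G r ∧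
      NCount G r ≤ NVCount G V r) := by
  obtain ⟨x₀, hx₀⟩ := hpair.nonempty
  set d := Metric.infDist 0 (V : Set (En n)) with hd
  have hd0 : 0 ≤ d := infDist_nonneg
  have part1 : ∀ γ ∈ G, ∀ v : En n, (∀ x ∈ (V : Set (En n)), γ x = x + v) →
      ‖v‖ ≤ ‖tran γ‖ ∧ ‖tran γ‖ ≤ ‖v‖ + 2 * d := by
    intro γ hγ v hv
    exact ⟨tranV_le_tran hpair.invariant hγ hx₀ hv, tran_le_tranV hpair.nonempty hv⟩
  refine ⟨part1, ?_⟩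
  intro r hr
  set A : ℝ → Set (Isom n) := fun t => {γ : Isom n | γ ∈ G ∧ ‖tran γ‖ ≤ t} with hA
  set C : ℝ → Set (Isom n) := fun t => {γ : Isom n | γ ∈ G ∧ ∃ v : En n,
    (∀ x ∈ (V : Set (En n)), γ x = x + v) ∧ ‖v‖ ≤ t} with hC
  have hAfin : ∀ t, (A t).Finite := fun t => finite_tran_le Γ G hΓ hpair.le t
  have hCA : ∀ t, C t ⊆ A (t + 2 * d) := by
    rintro t γ ⟨hγ, v, hv, hvr⟩
    refine ⟨hγ, ?_⟩
    have := (part1 γ hγ v hv).2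
    linarith
  have hCfin : ∀ t, (C t).Finite := fun t => (hAfin (t + 2 * d)).subset (hCA t)
  have hAC : ∀ t, A t ⊆ C t := by
    rintro t γ ⟨hγ, hγt⟩
    obtain ⟨v, hv⟩ := hpair.translation γ hγ
    refine ⟨hγ, v, hv, ?_⟩
    have := (part1 γ hγ v hv).1
    exact this.trans hγt
  have hCA' : C (r - 2 * d) ⊆ A r := by
    intro γ hγ
    have := hCA (r - 2 * d) hγ
    have heq : r - 2 * d + 2 * d = r := by ring
    rwa [heq] at this
  constructor
  · exact Set.ncard_le_ncard hCA' (hAfin r)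
  · exact Set.ncard_le_ncard (hAC r) (hCfin r)
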